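/- Let z = f + ig ∈ H¹(ℝ²;ℂ) with f, g real-valued, and let φ = |z| = sqrt(f² + g²). Then φ ∈ H¹(ℝ²;ℝ) and ‖∇f‖²_{L²} + ‖∇g‖²_{L²} − ‖∇φ‖²_{L²} = ∫_{f²+g²>0} Σ_{i=1}^{2} (f ∂_i g − g ∂_i f)² / (f² + g²) dx ≥ 0; in particular ‖∇z‖_{L²} ≥ ‖∇|z|‖_{L²}. -/

import Mathlib

open MeasureTheory Metric Filter Set Topology Pointwise

set_option maxHeartbeats 1000000

noncomputable section

/-- The plane `ℝ²`. -/
abbrev R2 : Type := EuclideanSpace ℝ (Fin 2)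

/-- The `j`-th (classical) partial derivative of a real-valued function on `ℝ²`. -/
noncomputable def pdR (f : R2 → ℝ) (j : Fin 2) (x : R2) : ℝ :=
  fderiv ℝ f x (EuclideanSpace.single j 1)

/-- `|∇f(x)|²` for a real-valued function. -/
noncomputable def gradsqR (f : R2 → ℝ) (x : R2) : ℝ :=
  pdR f 0 x ^ 2 + pdR f 1 x ^ 2

/-- The modulus `φ = |z| = sqrt(f² + g²)` of `z = f + ig`. -/
noncomputable def modFG (f g : R2 → ℝ) : R2 → ℝ :=
  fun x => Real.sqrt (f x ^ 2 + g x ^ 2)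


lemma fderiv_ae_zero_on_zeroset (f : R2 → ℝ) (hf : Differentiable ℝ f) :
    ∀ᵐ x ∂(volume.restrict {x : R2 | f x = 0}), fderiv ℝ f x = 0 := by
  set s : Set R2 := {x | f x = 0} with hs_def
  have hs : MeasurableSet s := (isClosed_singleton.preimage hf.continuous).measurableSet
  filter_upwards [Besicovitch.ae_tendsto_measure_inter_div volume s, ae_restrict_mem hs]
    with x hx hxs
  by_contra hL
  set L := fderiv ℝ f x with hLdef
  obtain ⟨u, hu⟩ : ∃ u, L u ≠ 0 := by
    by_contra h; push_neg at h
    exact hL (ContinuousLinearMap.ext fun u => by simp [h u])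
  obtain ⟨v, hv⟩ : ∃ v : R2, 0 < L v := by
    rcases hu.lt_or_gt with h | h
    · exact ⟨-u, by simpa using h⟩
    · exact ⟨u, h⟩
  have hvne : v ≠ 0 := by rintro rfl; simp at hv
  have hvn : 0 < ‖v‖ := norm_pos_iff.2 hvne
  set v₁ : R2 := (2 * ‖v‖)⁻¹ • v with hv₁def
  have hv₁norm : ‖v₁‖ = 1/2 := by
    rw [hv₁def, norm_smul, norm_inv, Real.norm_eq_abs, abs_of_pos (by positivity)]
    field_simp
  set a : ℝ := L v₁ with hadef
  have ha : 0 < a := by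
    rw [hadef, hv₁def, L.map_smul, smul_eq_mul]
    positivity
  have hLn : 0 < ‖L‖ := norm_pos_iff.2 hL
  set δ : ℝ := min (1/2) (a / (2 * ‖L‖)) with hδdef
  have hδ : 0 < δ := lt_min (by norm_num) (by positivity)
  set D : Set R2 := ball v₁ δ with hDdef
  have hDsub : D ⊆ ball (0 : R2) 1 := by
    intro w hw
    rw [mem_ball_zero_iff]
    calc ‖w‖ ≤ ‖v₁‖ + ‖w - v₁‖ := by
          simpa using norm_add_le v₁ (w - v₁)
      _ < 1/2 + 1/2 := by
          rw [hv₁norm]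
          exact add_lt_add_right (lt_of_lt_of_le (mem_ball_iff_norm.1 hw) (min_le_left _ _)) _
      _ = 1 := by norm_num
  have hDL : ∀ w ∈ D, a/2 ≤ L w := by
    intro w hw
    have h1 : ‖L (w - v₁)‖ ≤ ‖L‖ * δ :=
      le_trans (L.le_opNorm _) (by
        have := (mem_ball_iff_norm.1 hw).le
        exact mul_le_mul_of_nonneg_left this (norm_nonneg L))
    have h2 : ‖L‖ * δ ≤ a/2 := by
      have : δ ≤ a / (2 * ‖L‖) := min_le_right _ _
      calc ‖L‖ * δ ≤ ‖L‖ * (a / (2 * ‖L‖)) := mul_le_mul_of_nonneg_left this (norm_nonneg L)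
        _ = a/2 := by field_simp
    have h3 : L w = a + L (w - v₁) := by rw [map_sub]; ring
    have habs : |L (w - v₁)| ≤ a/2 := le_trans (by simpa [Real.norm_eq_abs] using h1) h2
    have h4 := (abs_le.1 habs).1
    linarith
  -- little-o estimate
  have hiso := hasFDerivAt_iff_isLittleO_nhds_zero.1 (hf x).hasFDerivAt
  have hev := hiso.def (show (0:ℝ) < a/4 by positivity)
  rw [Metric.eventually_nhds_iff] at hev
  obtain ⟨ε, hε, hball⟩ := hev
  -- the key measure inequality for small r
  set vB := volume (ball (0 : R2) 1) with hvBdef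
  set vD := volume D with hvDdef
  have hvD : vD ≠ 0 := (measure_ball_pos volume v₁ hδ).ne'
  have hvB0 : vB ≠ 0 := (measure_ball_pos volume 0 one_pos).ne'
  have hvBt : vB ≠ ⊤ := measure_ball_lt_top.ne
  have key : ∀ r : ℝ, 0 < r → r < ε →
      volume (s ∩ closedBall x r) / volume (closedBall x r) + vD / vB ≤ 1 := by
    intro r hr hrε
    set A : Set R2 := x +ᵥ (r • D) with hAdef
    have hAmem : ∀ y ∈ A, ∃ w ∈ D, y = x + r • w := by
      intro y hy
      obtain ⟨z, hz, rfl⟩ := hy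
      obtain ⟨w, hw, rfl⟩ := hz
      exact ⟨w, hw, rfl⟩
    have hAsub : A ⊆ closedBall x r := by
      intro y hy
      obtain ⟨w, hw, rfl⟩ := hAmem y hy
      rw [mem_closedBall, dist_self_add_left, norm_smul, Real.norm_eq_abs, abs_of_pos hr]
      nlinarith [norm_nonneg w, (mem_ball_zero_iff.1 (hDsub hw)).le]
    have hAdisj : Disjoint s A := by
      rw [Set.disjoint_right]
      intro y hy hys
      obtain ⟨w, hw, rfl⟩ := hAmem y hy
      have hwn : ‖w‖ < 1 := mem_ball_zero_iff.1 (hDsub hw)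
      have hnorm : ‖r • w‖ < ε := by
        rw [norm_smul, Real.norm_eq_abs, abs_of_pos hr]
        nlinarith [norm_nonneg w]
      have hest := hball (y := r • w) (by simpa [dist_zero_right] using hnorm)
      have hfx : f x = 0 := hxs
      have hLrw : r * (a/2) ≤ L (r • w) := by
        rw [L.map_smul, smul_eq_mul]
        exact mul_le_mul_of_nonneg_left (hDL w hw) hr.le
      have hsmall : ‖f (x + r • w) - f x - L (r • w)‖ ≤ a/4 * ‖r • w‖ := hest
      have hrw_le : ‖r • w‖ ≤ r := by
        rw [norm_smul, Real.norm_eq_abs, abs_of_pos hr]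
        nlinarith [norm_nonneg w]
      have : 0 < f (x + r • w) := by
        have h5 : ‖f (x + r • w) - f x - L (r • w)‖ ≤ a/4 * r := by
          calc ‖f (x + r • w) - f x - L (r • w)‖ ≤ a/4 * ‖r • w‖ := hsmall
            _ ≤ a/4 * r := by nlinarith
        rw [hfx, sub_zero, Real.norm_eq_abs, abs_le] at h5
        nlinarith [h5.1]
      have : f (x + r • w) = 0 := hys
      linarith
    have hAopen : IsOpen A := by
      have : IsOpen (r • D) := isOpen_ball.smul₀ hr.ne'
      simpa [hAdef] using this.vadd x
    have hunion : volume (s ∩ closedBall x r) + volume A ≤ volume (closedBall x r) := by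
      rw [← measure_union (hAdisj.mono (Set.inter_subset_left) le_rfl) hAopen.measurableSet]
      exact measure_mono (Set.union_subset Set.inter_subset_right hAsub)
    have hA : volume A = ENNReal.ofReal (r^2) * vD := by
      rw [hAdef, measure_vadd, Measure.addHaar_smul, finrank_euclideanSpace_fin,
        abs_of_nonneg (by positivity)]
    have hcb : volume (closedBall x r) = ENNReal.ofReal (r^2) * vB := by
      rw [Measure.addHaar_closedBall volume x hr.le, finrank_euclideanSpace_fin]
    have hc0 : (ENNReal.ofReal (r^2)) ≠ 0 := by
      simp [ENNReal.ofReal_eq_zero]; positivity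
    have hct : (ENNReal.ofReal (r^2)) ≠ ⊤ := ENNReal.ofReal_ne_top
    calc volume (s ∩ closedBall x r) / volume (closedBall x r) + vD / vB
        = volume (s ∩ closedBall x r) / volume (closedBall x r)
          + volume A / volume (closedBall x r) := by
          rw [hA, hcb, ENNReal.mul_div_mul_left _ _ hc0 hct]
      _ = (volume (s ∩ closedBall x r) + volume A) / volume (closedBall x r) := by
          rw [ENNReal.div_add_div_same]
      _ ≤ volume (closedBall x r) / volume (closedBall x r) :=
          ENNReal.div_le_div_right hunion _
      _ ≤ 1 := ENNReal.div_self_le_one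
  -- derive a contradiction with the density
  have hev2 : ∀ᶠ r in 𝓝[>] (0:ℝ),
      volume (s ∩ closedBall x r) / volume (closedBall x r) + vD / vB ≤ 1 := by
    filter_upwards [Ioo_mem_nhdsGT hε] with r hr
    exact key r hr.1 hr.2
  have hlim : Tendsto (fun r => volume (s ∩ closedBall x r) / volume (closedBall x r) + vD / vB)
      (𝓝[>] (0:ℝ)) (𝓝 (1 + vD / vB)) := hx.add tendsto_const_nhds
  have hfin := le_of_tendsto hlim hev2
  have h1 : (1 : ENNReal) + vD / vB ≤ 1 + 0 := by simpa using hfin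
  have h2 : vD / vB ≤ 0 := (ENNReal.add_le_add_iff_left (by simp)).1 h1
  have h3 : vD / vB ≠ 0 := (ENNReal.div_pos hvD hvBt).ne'
  exact h3 (le_antisymm h2 zero_le)

section lemmas

variable (f g : R2 → ℝ)

lemma hasFDerivAt_modFG (hf : Differentiable ℝ f) (hg : Differentiable ℝ g) {x : R2} (hx : 0 < f x ^ 2 + g x ^ 2) :
    HasFDerivAt (modFG f g)
      ((1 / (2 * Real.sqrt (f x ^ 2 + g x ^ 2))) •
        ((f x • fderiv ℝ f x + f x • fderiv ℝ f x) +
         (g x • fderiv ℝ g x + g x • fderiv ℝ g x))) x := by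
  have hq : HasFDerivAt (fun y => f y ^ 2 + g y ^ 2)
      ((f x • fderiv ℝ f x + f x • fderiv ℝ f x) +
       (g x • fderiv ℝ g x + g x • fderiv ℝ g x)) x := by
    have h1 := ((hf x).hasFDerivAt.mul (hf x).hasFDerivAt)
    have h2 := ((hg x).hasFDerivAt.mul (hg x).hasFDerivAt)
    have := h1.add h2
    simp only [pow_two]
    exact this
  have hs : HasDerivAt Real.sqrt (1 / (2 * Real.sqrt (f x ^ 2 + g x ^ 2)))
      (f x ^ 2 + g x ^ 2) := Real.hasDerivAt_sqrt hx.ne'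
  have := hs.comp_hasFDerivAt x hq
  exact this

lemma pd_modFG (hf : Differentiable ℝ f) (hg : Differentiable ℝ g) {x : R2} (hx : 0 < f x ^ 2 + g x ^ 2) (j : Fin 2) :
    pdR (modFG f g) j x
      = (f x * pdR f j x + g x * pdR g j x) / Real.sqrt (f x ^ 2 + g x ^ 2) := by
  have hF := hasFDerivAt_modFG f g hf hg hx
  have hsq : Real.sqrt (f x ^ 2 + g x ^ 2) ≠ 0 := by
    exact (Real.sqrt_pos.2 hx).ne'
  rw [pdR, hF.fderiv]
  simp only [ContinuousLinearMap.coe_smul', Pi.smul_apply, ContinuousLinearMap.add_apply,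
    ContinuousLinearMap.coe_smul, smul_eq_mul]
  rw [pdR, pdR]
  field_simp
  ring

lemma pd_modFG_zero {x : R2} (hfx : f x = 0) (hgx : g x = 0) (j : Fin 2) :
    pdR (modFG f g) j x = 0 := by
  by_cases hd : DifferentiableAt ℝ (modFG f g) x
  · have hmin : IsLocalMin (modFG f g) x := by
      apply Filter.Eventually.of_forall
      intro y
      simp only [modFG, hfx, hgx]
      rw [show (0:ℝ) ^ 2 + (0:ℝ) ^ 2 = 0 by ring, Real.sqrt_zero]
      positivity
    rw [pdR, hmin.fderiv_eq_zero]
    simp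
  · rw [pdR, fderiv_zero_of_not_differentiableAt hd]
    simp

lemma gradsq_modFG_eq (hf : Differentiable ℝ f) (hg : Differentiable ℝ g) {x : R2} (hx : 0 < f x ^ 2 + g x ^ 2) :
    gradsqR (modFG f g) x
      = ((f x * pdR f 0 x + g x * pdR g 0 x) ^ 2
          + (f x * pdR f 1 x + g x * pdR g 1 x) ^ 2) / (f x ^ 2 + g x ^ 2) := by
  rw [gradsqR, pd_modFG f g hf hg hx 0, pd_modFG f g hf hg hx 1, div_pow, div_pow,
    Real.sq_sqrt hx.le, ← add_div]

lemma gradsq_modFG_le (hf : Differentiable ℝ f) (hg : Differentiable ℝ g) (x : R2) :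
    gradsqR (modFG f g) x ≤ gradsqR f x + gradsqR g x := by
  by_cases hx : 0 < f x ^ 2 + g x ^ 2
  · rw [gradsq_modFG_eq f g hf hg hx, div_le_iff₀ hx, gradsqR, gradsqR]
    nlinarith [sq_nonneg (f x * pdR g 0 x - g x * pdR f 0 x),
      sq_nonneg (f x * pdR g 1 x - g x * pdR f 1 x)]
  · have h0 : f x ^ 2 + g x ^ 2 = 0 := le_antisymm (not_lt.1 hx) (by positivity)
    have hfx : f x = 0 := by nlinarith [sq_nonneg (f x), sq_nonneg (g x)]
    have hgx : g x = 0 := by nlinarith [sq_nonneg (f x), sq_nonneg (g x)]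
    rw [gradsqR, pd_modFG_zero f g hfx hgx 0, pd_modFG_zero f g hfx hgx 1]
    rw [gradsqR, gradsqR]
    norm_num
    positivity

end lemmas
/-- For `z = f + ig ∈ H¹(ℝ²;ℂ)`, the modulus `φ = |z|` lies in `H¹(ℝ²;ℝ)` and
`‖∇f‖₂² + ‖∇g‖₂² − ‖∇φ‖₂² = ∫_{f²+g²>0} Σᵢ (f ∂ᵢg − g ∂ᵢf)²/(f²+g²) ≥ 0`;
in particular `‖∇|z|‖₂ ≤ ‖∇z‖₂`. -/
theorem stmt19 (f g : R2 → ℝ) (hf : Differentiable ℝ f) (hg : Differentiable ℝ g)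
    (hf2 : MemLp f 2 volume) (hg2 : MemLp g 2 volume)
    (hfg : Integrable (gradsqR f) volume) (hgg : Integrable (gradsqR g) volume) :
    MemLp (modFG f g) 2 volume ∧
    Integrable (gradsqR (modFG f g)) volume ∧
    (∫ x : R2, (gradsqR f x + gradsqR g x)) - (∫ x : R2, gradsqR (modFG f g) x)
      = ∫ x in {x : R2 | 0 < f x ^ 2 + g x ^ 2},
          ((f x * pdR g 0 x - g x * pdR f 0 x) ^ 2 +
            (f x * pdR g 1 x - g x * pdR f 1 x) ^ 2) / (f x ^ 2 + g x ^ 2) ∧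
    (∫ x : R2, gradsqR (modFG f g) x) ≤ ∫ x : R2, (gradsqR f x + gradsqR g x) := by
  have hcont : Continuous (modFG f g) :=
    ((hf.continuous.pow 2).add (hg.continuous.pow 2)).sqrt
  have hmeasφ : Measurable (gradsqR (modFG f g)) := by
    have h0 : Measurable fun x => fderiv ℝ (modFG f g) x (EuclideanSpace.single (0 : Fin 2) 1) :=
      measurable_fderiv_apply_const ℝ _ _
    have h1 : Measurable fun x => fderiv ℝ (modFG f g) x (EuclideanSpace.single (1 : Fin 2) 1) :=
      measurable_fderiv_apply_const ℝ _ _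
    exact ((h0.pow_const 2).add (h1.pow_const 2))
  -- Part 1
  have part1 : MemLp (modFG f g) 2 volume := by
    have hb : MemLp (fun x => ‖f x‖ + ‖g x‖) 2 volume := hf2.norm.add hg2.norm
    refine MemLp.of_le hb hcont.aestronglyMeasurable (Filter.Eventually.of_forall fun x => ?_)
    have h1 : 0 ≤ modFG f g x := Real.sqrt_nonneg _
    rw [Real.norm_eq_abs, abs_of_nonneg h1]
    have h2 : modFG f g x ≤ ‖f x‖ + ‖g x‖ := by
      rw [modFG]
      have hle : f x ^ 2 + g x ^ 2 ≤ (‖f x‖ + ‖g x‖) ^ 2 := by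
        rw [Real.norm_eq_abs, Real.norm_eq_abs]
        nlinarith [abs_nonneg (f x), abs_nonneg (g x), sq_abs (f x), sq_abs (g x),
          mul_nonneg (abs_nonneg (f x)) (abs_nonneg (g x))]
      calc Real.sqrt (f x ^ 2 + g x ^ 2) ≤ Real.sqrt ((‖f x‖ + ‖g x‖) ^ 2) :=
            Real.sqrt_le_sqrt hle
        _ = ‖f x‖ + ‖g x‖ := Real.sqrt_sq (by positivity)
    exact h2.trans (le_abs_self _)
  -- Part 2
  have part2 : Integrable (gradsqR (modFG f g)) volume := by
    refine (hfg.add hgg).mono' hmeasφ.aestronglyMeasurable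
      (Filter.Eventually.of_forall fun x => ?_)
    rw [Real.norm_eq_abs, abs_of_nonneg (by rw [gradsqR]; positivity)]
    exact gradsq_modFG_le f g hf hg x
  -- Part 3
  set S := {x : R2 | 0 < f x ^ 2 + g x ^ 2} with hSdef
  have hSopen : IsOpen S :=
    isOpen_lt continuous_const ((hf.continuous.pow 2).add (hg.continuous.pow 2))
  have hS := hSopen.measurableSet
  have hcompl : ∀ x ∈ Sᶜ, f x = 0 ∧ g x = 0 := by
    intro x hx
    simp only [hSdef, Set.mem_compl_iff, Set.mem_setOf_eq, not_lt] at hx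
    constructor <;> nlinarith [sq_nonneg (f x), sq_nonneg (g x)]
  have hf0 : ∀ᵐ x ∂(volume.restrict Sᶜ), fderiv ℝ f x = 0 :=
    ae_restrict_of_ae_restrict_of_subset (fun x hx => (hcompl x hx).1)
      (fderiv_ae_zero_on_zeroset f hf)
  have hg0 : ∀ᵐ x ∂(volume.restrict Sᶜ), fderiv ℝ g x = 0 :=
    ae_restrict_of_ae_restrict_of_subset (fun x hx => (hcompl x hx).2)
      (fderiv_ae_zero_on_zeroset g hg)
  have hint1 : ∫ x in Sᶜ, (gradsqR f x + gradsqR g x) = 0 := by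
    apply integral_eq_zero_of_ae
    filter_upwards [hf0, hg0] with x h1 h2
    simp [gradsqR, pdR, h1, h2]
  have hint2 : ∫ x in Sᶜ, gradsqR (modFG f g) x = 0 := by
    apply integral_eq_zero_of_ae
    filter_upwards [ae_restrict_mem hS.compl] with x hx
    obtain ⟨h1, h2⟩ := hcompl x hx
    simp [gradsqR, pd_modFG_zero f g h1 h2]
  have hsumInt : Integrable (fun x => gradsqR f x + gradsqR g x) volume := hfg.add hgg
  have htot1 : ∫ x : R2, (gradsqR f x + gradsqR g x)
      = ∫ x in S, (gradsqR f x + gradsqR g x) := by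
    rw [← integral_add_compl hS hsumInt, hint1, add_zero]
  have htot2 : ∫ x : R2, gradsqR (modFG f g) x = ∫ x in S, gradsqR (modFG f g) x := by
    rw [← integral_add_compl hS part2, hint2, add_zero]
  have heq : ∫ x in S, ((gradsqR f x + gradsqR g x) - gradsqR (modFG f g) x)
      = ∫ x in S, ((f x * pdR g 0 x - g x * pdR f 0 x) ^ 2 +
          (f x * pdR g 1 x - g x * pdR f 1 x) ^ 2) / (f x ^ 2 + g x ^ 2) := by
    apply setIntegral_congr_fun hS
    intro x hx
    have hx' : 0 < f x ^ 2 + g x ^ 2 := hx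
    dsimp only
    rw [gradsq_modFG_eq f g hf hg hx']
    simp only [gradsqR]
    field_simp
    ring
  have part3 : (∫ x : R2, (gradsqR f x + gradsqR g x)) - (∫ x : R2, gradsqR (modFG f g) x)
      = ∫ x in S, ((f x * pdR g 0 x - g x * pdR f 0 x) ^ 2 +
          (f x * pdR g 1 x - g x * pdR f 1 x) ^ 2) / (f x ^ 2 + g x ^ 2) := by
    rw [htot1, htot2, ← integral_sub hsumInt.integrableOn part2.integrableOn, heq]
  have part4 : (∫ x : R2, gradsqR (modFG f g) x) ≤ ∫ x : R2, (gradsqR f x + gradsqR g x) := by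
    have hnn : 0 ≤ ∫ x in S, ((f x * pdR g 0 x - g x * pdR f 0 x) ^ 2 +
        (f x * pdR g 1 x - g x * pdR f 1 x) ^ 2) / (f x ^ 2 + g x ^ 2) := by
      apply setIntegral_nonneg hS
      intro x hx
      exact div_nonneg (by positivity) (le_of_lt hx)
    linarith [part3]
  exact ⟨part1, part2, part3, part4⟩
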